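/- Every lacunary sequence has infinite refined Diophantine exponent. Concretely: let b be a letter and (u_n) a strictly increasing sequence of non-negative integers with liminf u_{n+1}/u_n > 1, and let a be the word with a_i ≠ b exactly when i = u_n for some n. Then for every ρ ≥ 1 and every ε > 0 there exist sequences r_n < s_n < t_n with t_n ≥ ρ s_n, s_n - r_n → ∞, and a fixed δ such that the words a[r_n+1, r_n+t_n-s_n] and a[s_n+1, t_n] differ in at most δ positions. -/
import Mathlib


open Filter

/-- Every lacunary sequence has infinite refined Diophantine exponent: if `a i ≠ b` exactly
when `i = u n` for some `n`, where `(u n)` is strictly increasing with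
`liminf u (n+1) / u n > 1`, then for every `ρ ≥ 1` and `ε > 0` there are sequences
`r n < s n < t n` with `t n ≥ ρ s n`, `s n - r n → ∞`, and a fixed `δ` such that the words
`a[r n + 1, r n + t n - s n]` and `a[s n + 1, t n]` differ in at most `δ` positions. -/
theorem stmt_13 {A : Type*} [DecidableEq A] (b : A) (u : ℕ → ℕ) (hmono : StrictMono u)
    (hliminf : 1 < Filter.liminf (fun n => (u (n + 1) : ℝ) / (u n : ℝ)) Filter.atTop)
    (a : ℕ → A) (ha : ∀ i, a i ≠ b ↔ ∃ n, i = u n)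
    (ρ : ℝ) (hρ : 1 ≤ ρ) (ε : ℝ) (hε : 0 < ε) :
    ∃ (r s t : ℕ → ℕ) (δ : ℕ),
      (∀ n, r n < s n ∧ s n < t n) ∧
      (∀ n, ρ * (s n : ℝ) ≤ (t n : ℝ)) ∧
      Filter.Tendsto (fun n => s n - r n) Filter.atTop Filter.atTop ∧
      ∀ n, ((Finset.Icc 1 (t n - s n)).filter fun i => a (r n + i) ≠ a (s n + i)).card
        ≤ δ := by
  set L := Filter.liminf (fun n => (u (n + 1) : ℝ) / (u n : ℝ)) Filter.atTop with hL
  set c : ℝ := (1 + L) / 2 with hc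
  have hc1 : 1 < c := by simp only [hc]; linarith
  have hcL : c < L := by simp only [hc]; linarith
  have hcobdd : IsBoundedUnder (· ≥ ·) atTop (fun n => (u (n + 1) : ℝ) / (u n : ℝ)) :=
    isBoundedUnder_of ⟨0, fun n => by positivity⟩
  have hev : ∀ᶠ n in atTop, c < (u (n + 1) : ℝ) / (u n : ℝ) :=
    eventually_lt_of_lt_liminf hcL hcobdd
  obtain ⟨N₀, hN₀⟩ := eventually_atTop.mp hev
  set N : ℕ := N₀ + 1 with hN
  have hupos : ∀ m, N ≤ m → (0 : ℝ) < u m := by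
    intro m hm
    have h1 : 1 ≤ u m := le_trans (by omega) hmono.le_apply
    exact_mod_cast h1
  have hstep : ∀ m, N ≤ m → c * u m ≤ u (m + 1) := by
    intro m hm
    have h := hN₀ m (by omega)
    have := (lt_div_iff₀ (hupos m hm)).mp h
    linarith
  have hpow : ∀ j m, N ≤ m → c ^ j * u m ≤ u (m + j) := by
    intro j
    induction j with
    | zero => intro m _; simp
    | succ j ih =>
      intro m hm
      have h1 := ih m hm
      have h2 := hstep (m + j) (by omega)
      have hcpos : (0 : ℝ) < c ^ j := by positivity
      calc c ^ (j + 1) * u m = c * (c ^ j * u m) := by ring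
        _ ≤ c * u (m + j) := by nlinarith
        _ ≤ u (m + j + 1) := h2
  obtain ⟨k, hk⟩ : ∃ k, ρ < c ^ k := pow_unbounded_of_one_lt ρ hc1
  refine ⟨fun n => u (n + N), fun n => u (n + N + 1), fun n => u (n + N + (k + 2)),
    2 * (k + 1), ?_, ?_, ?_, ?_⟩
  · intro n
    exact ⟨hmono (by omega), hmono (by omega)⟩
  · intro n
    have h1 := hpow (k + 1) (n + N + 1) (by omega)
    have hidx : n + N + 1 + (k + 1) = n + N + (k + 2) := by omega
    rw [hidx] at h1
    have h2 : ρ ≤ c ^ (k + 1) := by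
      calc ρ ≤ c ^ k := hk.le
        _ ≤ c ^ (k + 1) := pow_le_pow_right₀ (by linarith) (by omega)
    have h3 : (0 : ℝ) ≤ (u (n + N + 1) : ℝ) := by positivity
    calc ρ * u (n + N + 1) ≤ c ^ (k + 1) * u (n + N + 1) :=
          mul_le_mul_of_nonneg_right h2 h3
      _ ≤ u (n + N + (k + 2)) := h1
  · rw [Filter.tendsto_atTop]
    intro M
    obtain ⟨M', hM'⟩ := exists_nat_ge ((M : ℝ) / (c - 1))
    filter_upwards [eventually_ge_atTop M'] with n hn
    have h1 : (M' : ℝ) ≤ u (n + N) := by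
      have : M' ≤ u (n + N) := le_trans hn (le_trans (Nat.le_add_right n N) hmono.le_apply)
      exact_mod_cast this
    have h2 : c * u (n + N) ≤ u (n + N + 1) := hstep _ (by omega)
    have h3 : (M : ℝ) ≤ (c - 1) * u (n + N) := by
      have h4 : (M : ℝ) ≤ M' * (c - 1) := by
        rw [div_le_iff₀ (by linarith)] at hM'; linarith
      nlinarith
    have h5 : (M : ℝ) ≤ (u (n + N + 1) : ℝ) - u (n + N) := by linarith
    have h6 : u (n + N) ≤ u (n + N + 1) := (hmono (by omega : n + N < n + N + 1)).le
    have h7 : ((u (n + N + 1) - u (n + N) : ℕ) : ℝ) = (u (n + N + 1) : ℝ) - u (n + N) :=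
      Nat.cast_sub h6
    have : (M : ℝ) ≤ ((u (n + N + 1) - u (n + N) : ℕ) : ℝ) := by rw [h7]; exact h5
    exact_mod_cast this
  · intro n
    set r := u (n + N) with hr
    set s := u (n + N + 1) with hs
    set t := u (n + N + (k + 2)) with ht
    have hrs : r < s := hmono (by omega)
    have hst : s < t := hmono (by omega)
    set S1 : Finset ℕ := (Finset.Icc (n + N + 1) (n + N + k + 1)).image (fun m => u m - r)
      with hS1
    set S2 : Finset ℕ := (Finset.Icc (n + N + 2) (n + N + k + 2)).image (fun m => u m - s)
      with hS2
    have hsub : ((Finset.Icc 1 (t - s)).filter fun i => a (r + i) ≠ a (s + i)) ⊆ S1 ∪ S2 := by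
      intro i hi
      simp only [Finset.mem_filter, Finset.mem_Icc] at hi
      obtain ⟨⟨hi1, hi2⟩, hne⟩ := hi
      by_cases h1 : ∃ m, r + i = u m
      · obtain ⟨m, hm⟩ := h1
        apply Finset.mem_union_left
        rw [hS1, Finset.mem_image]
        refine ⟨m, ?_, by omega⟩
        rw [Finset.mem_Icc]
        have hlo : r < u m := by omega
        have hlo' : n + N < m := hmono.lt_iff_lt.mp hlo
        have hhi : u m < t := by
          have : r + i ≤ r + (t - s) := by omega
          omega
        have hhi' : m < n + N + (k + 2) := hmono.lt_iff_lt.mp hhi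
        omega
      · by_cases h2 : ∃ m, s + i = u m
        · obtain ⟨m, hm⟩ := h2
          apply Finset.mem_union_right
          rw [hS2, Finset.mem_image]
          refine ⟨m, ?_, by omega⟩
          rw [Finset.mem_Icc]
          have hlo : s < u m := by omega
          have hlo' : n + N + 1 < m := hmono.lt_iff_lt.mp hlo
          have hhi : u m ≤ t := by omega
          have hhi' : m ≤ n + N + (k + 2) := by
            by_contra hcon
            have := hmono (by omega : n + N + (k + 2) < m)
            omega
          omega
        · exfalso
          have e1 : a (r + i) = b := by
            by_contra hc'; exact h1 ((ha _).mp hc')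
          have e2 : a (s + i) = b := by
            by_contra hc'; exact h2 ((ha _).mp hc')
          rw [e1, e2] at hne; exact hne rfl
    calc ((Finset.Icc 1 (t - s)).filter fun i => a (r + i) ≠ a (s + i)).card
        ≤ (S1 ∪ S2).card := Finset.card_le_card hsub
      _ ≤ S1.card + S2.card := Finset.card_union_le _ _
      _ ≤ (k + 1) + (k + 1) := by
          gcongr
          · calc S1.card ≤ (Finset.Icc (n + N + 1) (n + N + k + 1)).card :=
                Finset.card_image_le
              _ = k + 1 := by rw [Nat.card_Icc]; omega
          · calc S2.card ≤ (Finset.Icc (n + N + 2) (n + N + k + 2)).card :=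
                Finset.card_image_le
              _ = k + 1 := by rw [Nat.card_Icc]; omega
      _ = 2 * (k + 1) := by ring
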